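/- Let |ψ⟩ ∈ H_A and |φ⟩ ∈ H_B ⊗ H_C be unit vectors with H_A ≅ H_B, and suppose tr(Π_sym (|ψ⟩⟨ψ| ⊗ |φ⟩⟨φ|)) ≥ 1 - ε > 1/2, where Π_sym = (I + F)/2 projects onto the symmetric subspace of H_A ⊗ H_B. Then there exists a unit vector |φ₂⟩ ∈ H_C such that the trace distance between |φ⟩ and |ψ⟩⊗|φ₂⟩ is at most √(2ε). -/

import Mathlib

open Matrix Kronecker

lemma mul_conj_self_eq (z : ℂ) : z * (starRingEnd ℂ) z = (‖z‖^2 : ℝ) := by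
  rw [Complex.mul_conj]; norm_cast; rw [Complex.normSq_eq_norm_sq]

/-- If `|ψ⟩ ∈ H_A` and `|φ⟩ ∈ H_B ⊗ H_C` are unit vectors (with `H_A ≅ H_B = ℂ^a`,
`H_C = ℂ^c`) and `tr(Π_sym (|ψ⟩⟨ψ| ⊗ |φ⟩⟨φ|)) ≥ 1 - ε > 1/2`, where
`Π_sym = (I + F)/2` with `F` the swap of registers `A` and `B`, then there is a unit
vector `|φ₂⟩ ∈ H_C` with trace distance `d_tr(|φ⟩, |ψ⟩⊗|φ₂⟩) ≤ √(2ε)`. -/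
theorem close_to_product_of_symmetric (a c : ℕ) (ψ : Fin a → ℂ) (φ : Fin a × Fin c → ℂ)
    (hψ : ∑ i, ‖ψ i‖ ^ 2 = 1) (hφ : ∑ p, ‖φ p‖ ^ 2 = 1)
    (ε : ℝ) (hε : ε < 1 / 2)
    (F : Matrix (Fin a × (Fin a × Fin c)) (Fin a × (Fin a × Fin c)) ℂ)
    (hF : ∀ u v, F u v = if u.1 = v.2.1 ∧ u.2.1 = v.1 ∧ u.2.2 = v.2.2 then 1 else 0)
    (h : 1 - ε ≤
      (((2 : ℂ)⁻¹ • (1 + F)) *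
        (Matrix.vecMulVec ψ (star ψ) ⊗ₖ Matrix.vecMulVec φ (star φ))).trace.re) :
    ∃ φ₂ : Fin c → ℂ, (∑ k, ‖φ₂ k‖ ^ 2 = 1) ∧
      Real.sqrt (1 - ‖∑ p : Fin a × Fin c, (starRingEnd ℂ) (ψ p.1 * φ₂ p.2) * φ p‖ ^ 2)
        ≤ Real.sqrt (2 * ε) := by
  classical
  set A := Matrix.vecMulVec ψ (star ψ) with hA
  set B := Matrix.vecMulVec φ (star φ) with hB
  set w : Fin c → ℂ := fun k => ∑ i, (starRingEnd ℂ) (ψ i) * φ (i, k) with hw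
  set S : ℝ := ∑ k, ‖w k‖ ^ 2 with hS
  -- traces of A and B
  have htraceA : A.trace = 1 := by
    have : A.trace = ∑ i, ((‖ψ i‖ ^ 2 : ℝ) : ℂ) := by
      simp only [Matrix.trace, Matrix.diag, hA, Matrix.vecMulVec_apply, Pi.star_apply]
      exact Finset.sum_congr rfl fun i _ => mul_conj_self_eq _
    rw [this, ← Complex.ofReal_sum, hψ, Complex.ofReal_one]
  have htraceB : B.trace = 1 := by
    have : B.trace = ∑ p, ((‖φ p‖ ^ 2 : ℝ) : ℂ) := by
      simp only [Matrix.trace, Matrix.diag, hB, Matrix.vecMulVec_apply, Pi.star_apply]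
      exact Finset.sum_congr rfl fun p _ => mul_conj_self_eq _
    rw [this, ← Complex.ofReal_sum, hφ, Complex.ofReal_one]
  -- trace of F * (A ⊗ₖ B)
  have hFM : (F * (A ⊗ₖ B)).trace = (S : ℂ) := by
    have h1 : ∀ u : Fin a × (Fin a × Fin c),
        ∑ v, F u v * (A ⊗ₖ B) v u = (A ⊗ₖ B) (u.2.1, (u.1, u.2.2)) u := by
      intro u
      rw [Finset.sum_eq_single (u.2.1, (u.1, u.2.2))]
      · rw [hF]; simp
      · intro v _ hv
        rw [hF, if_neg, zero_mul]
        rintro ⟨h1, h2, h3⟩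
        exact hv (by obtain ⟨v1, v2, v3⟩ := v; simp_all)
      · simp
    have h2 : (F * (A ⊗ₖ B)).trace = ∑ u, (A ⊗ₖ B) (u.2.1, (u.1, u.2.2)) u := by
      simp only [Matrix.trace, Matrix.diag, Matrix.mul_apply]
      exact Finset.sum_congr rfl fun u _ => h1 u
    rw [h2]
    have h3 : ∑ u : Fin a × (Fin a × Fin c), (A ⊗ₖ B) (u.2.1, (u.1, u.2.2)) u
        = ∑ i, ∑ j, ∑ k, (ψ j * (starRingEnd ℂ) (ψ i)) * (φ (i, k) * (starRingEnd ℂ) (φ (j, k))) := by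
      rw [Fintype.sum_prod_type]
      refine Finset.sum_congr rfl fun i _ => ?_
      rw [Fintype.sum_prod_type]
      refine Finset.sum_congr rfl fun j _ => Finset.sum_congr rfl fun k _ => ?_
      simp [hA, hB, Matrix.kroneckerMap_apply, Matrix.vecMulVec_apply]
    rw [h3]
    have h4 : (S : ℂ) = ∑ k, w k * (starRingEnd ℂ) (w k) := by
      rw [hS, Complex.ofReal_sum]
      exact Finset.sum_congr rfl fun k _ => (mul_conj_self_eq (w k)).symm
    rw [h4]
    have h5 : ∀ k, w k * (starRingEnd ℂ) (w k)
        = ∑ i, ∑ j, ((starRingEnd ℂ) (ψ i) * φ (i, k)) * (ψ j * (starRingEnd ℂ) (φ (j, k))) := by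
      intro k
      rw [hw]
      simp only [map_sum, _root_.map_mul, Complex.conj_conj]
      rw [Finset.sum_mul_sum]
    calc ∑ i, ∑ j, ∑ k, (ψ j * (starRingEnd ℂ) (ψ i)) * (φ (i, k) * (starRingEnd ℂ) (φ (j, k)))
        = ∑ i, ∑ k, ∑ j, (ψ j * (starRingEnd ℂ) (ψ i)) * (φ (i, k) * (starRingEnd ℂ) (φ (j, k))) :=
          Finset.sum_congr rfl fun i _ => Finset.sum_comm
      _ = ∑ k, ∑ i, ∑ j, (ψ j * (starRingEnd ℂ) (ψ i)) * (φ (i, k) * (starRingEnd ℂ) (φ (j, k))) :=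
          Finset.sum_comm
      _ = ∑ k, w k * (starRingEnd ℂ) (w k) := by
          refine Finset.sum_congr rfl fun k _ => ?_
          rw [h5 k]
          exact Finset.sum_congr rfl fun i _ => Finset.sum_congr rfl fun j _ => by ring
  -- total trace
  have htr : (((2 : ℂ)⁻¹ • (1 + F)) * (A ⊗ₖ B)).trace = (2 : ℂ)⁻¹ * (1 + (S : ℂ)) := by
    rw [Matrix.smul_mul, Matrix.trace_smul, add_mul, one_mul, Matrix.trace_add,
      Matrix.trace_kronecker, htraceA, htraceB, hFM, smul_eq_mul, one_mul]
  rw [htr] at h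
  have hSre : (2 : ℂ)⁻¹ * (1 + (S : ℂ)) = (((1 + S) / 2 : ℝ) : ℂ) := by
    push_cast; ring
  rw [hSre, Complex.ofReal_re] at h
  have hSge : 1 - 2 * ε ≤ S := by linarith
  have hSpos : 0 < S := by linarith
  set n : ℝ := Real.sqrt S with hn
  have hnpos : 0 < n := Real.sqrt_pos.mpr hSpos
  have hn2 : n ^ 2 = S := Real.sq_sqrt hSpos.le
  refine ⟨fun k => w k / (n : ℂ), ?_, ?_⟩
  · have hnn : ∀ k, ‖w k / (n : ℂ)‖ ^ 2 = ‖w k‖ ^ 2 / n ^ 2 := by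
      intro k
      rw [norm_div, div_pow, Complex.norm_real, Real.norm_of_nonneg hnpos.le]
    rw [Finset.sum_congr rfl fun k _ => hnn k, ← Finset.sum_div, ← hS, hn2, div_self hSpos.ne']
  · have e1 : ∑ p : Fin a × Fin c, (starRingEnd ℂ) (ψ p.1 * (w p.2 / (n : ℂ))) * φ p
        = ∑ k, ((starRingEnd ℂ) (w k) / (n : ℂ)) * w k := by
      rw [Fintype.sum_prod_type_right]
      refine Finset.sum_congr rfl fun k _ => ?_
      have step : ∀ i, (starRingEnd ℂ) (ψ i * (w k / (n : ℂ))) * φ (i, k)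
          = ((starRingEnd ℂ) (w k) / (n : ℂ)) * ((starRingEnd ℂ) (ψ i) * φ (i, k)) := by
        intro i
        simp only [_root_.map_mul, map_div₀, Complex.conj_ofReal]
        ring
      rw [Finset.sum_congr rfl fun i _ => step i, ← Finset.mul_sum]
    have e2 : ∑ k, ((starRingEnd ℂ) (w k) / (n : ℂ)) * w k = (S : ℂ) / (n : ℂ) := by
      have step : ∀ k, ((starRingEnd ℂ) (w k) / (n : ℂ)) * w k
          = ((‖w k‖ ^ 2 : ℝ) : ℂ) / (n : ℂ) := by
        intro k
        rw [div_mul_eq_mul_div, mul_comm, mul_conj_self_eq]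
      rw [Finset.sum_congr rfl fun k _ => step k, ← Finset.sum_div, ← Complex.ofReal_sum, ← hS]
    have hov : ∑ p : Fin a × Fin c, (starRingEnd ℂ) (ψ p.1 * (w p.2 / (n : ℂ))) * φ p = (n : ℂ) := by
      rw [e1, e2, ← hn2]
      push_cast
      rw [pow_two, mul_div_assoc, div_self (by exact_mod_cast hnpos.ne'), mul_one]
    rw [hov]
    have hnrm : ‖(n : ℂ)‖ ^ 2 = S := by
      rw [Complex.norm_real, Real.norm_of_nonneg hnpos.le, hn2]
    rw [hnrm]
    exact Real.sqrt_le_sqrt (by linarith)
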